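/- Let G be a bipartite simple graph with diameter 8 and girth 16. Then every path in G with 10 vertices (a path of length 9) is a subgraph of exactly one 16-cycle of G. -/

import Mathlib

open SimpleGraph

set_option linter.unusedSectionVars false

section Aux
open Walk

variable {V : Type*} [DecidableEq V] {G : SimpleGraph V}

lemma walk_parity (C : G.Coloring (Fin 2)) {u v : V} (w : G.Walk u v) :
    (C u = C v) ↔ Even w.length := by
  induction w with
  | nil => simp
  | @cons u x v h w ih =>
    have hne := C.valid h
    have key : ∀ a b c : Fin 2, a ≠ b → (a = c ↔ ¬ (b = c)) := by decide
    rw [Walk.length_cons, Nat.even_add_one, ← ih]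
    exact key _ _ _ hne

-- a path from a whose edges contain s(a,x) starts with that edge
lemma path_first_edge {a v x : V} {p : G.Walk a v} (hp : p.IsPath)
    (he : s(a, x) ∈ p.edges) :
    ∃ (h : G.Adj a x) (q : G.Walk x v), p = Walk.cons h q := by
  cases p with
  | nil => simp at he
  | @cons _ y _ h q =>
    rw [Walk.edges_cons, List.mem_cons] at he
    rcases he with he | he
    · have hxy : x = y := by
        rw [Sym2.congr_right] at he; exact he
      subst hxy
      exact ⟨h, q, rfl⟩
    · exfalso
      have : a ∈ q.support := q.fst_mem_support_of_mem_edges he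
      rw [Walk.cons_isPath_iff] at hp
      exact hp.2 this

lemma path_loop_nil {b : V} {r : G.Walk b b} (h : r.IsPath) : r = Walk.nil := by
  cases r with
  | nil => rfl
  | cons h' r' =>
    rw [Walk.cons_isPath_iff] at h
    exact absurd r'.end_mem_support h.2

-- a path whose edges are contained in another path's (same start) is a prefix
lemma path_prefix {a b w : V} (p : G.Walk a b) (t : G.Walk a w)
    (hp : p.IsPath) (ht : t.IsPath) (h : ∀ e ∈ p.edges, e ∈ t.edges) :
    ∃ r : G.Walk b w, t = p.append r := by
  induction p with
  | nil => exact ⟨t, rfl⟩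
  | @cons a x b h0 p' ih =>
    have he : s(a, x) ∈ t.edges := h _ (by simp)
    obtain ⟨hax, t', rfl⟩ := path_first_edge ht he
    have hpt : t'.IsPath := (Walk.cons_isPath_iff _ _).1 ht |>.1
    have hp' : p'.IsPath := (Walk.cons_isPath_iff _ _).1 hp |>.1
    have hnd : s(a, x) ∉ p'.edges := by
      have := hp.isTrail.edges_nodup
      rw [Walk.edges_cons, List.nodup_cons] at this
      exact this.1
    have hsub : ∀ e ∈ p'.edges, e ∈ t'.edges := by
      intro e hep
      have := h e (by simp [hep])
      rw [Walk.edges_cons, List.mem_cons] at this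
      rcases this with rfl | h2
      · exact absurd hep hnd
      · exact h2
    obtain ⟨r, rfl⟩ := ih t' hp' hpt hsub
    exact ⟨r, rfl⟩

lemma path_eq_of_edges_subset {a b : V} {p q : G.Walk a b} (hp : p.IsPath)
    (hq : q.IsPath) (h : ∀ e ∈ p.edges, e ∈ q.edges) : p = q := by
  obtain ⟨r, rfl⟩ := path_prefix p q hp hq h
  have hr : r.IsPath := hq.of_append_right
  rw [path_loop_nil hr, Walk.append_nil]

-- decompose a walk at an edge
lemma walk_edge_decomp {a b : V} {p : G.Walk a b} {e : Sym2 V} (he : e ∈ p.edges) :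
    ∃ (x y : V) (h : G.Adj x y) (p1 : G.Walk a x) (p2 : G.Walk y b),
      p = p1.append (Walk.cons h p2) ∧ e = s(x, y) := by
  induction p with
  | nil => simp at he
  | @cons a c b h0 p' ih =>
    rw [Walk.edges_cons, List.mem_cons] at he
    rcases he with rfl | he
    · exact ⟨a, c, h0, Walk.nil, p', by simp, rfl⟩
    · obtain ⟨x, y, h, p1, p2, rfl, rfl⟩ := ih he
      exact ⟨x, y, h, Walk.cons h0 p1, p2, by simp, rfl⟩

-- a walk from y to x avoiding the edge s(x,y) gives a cycle of length ≤ W.length + 1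
lemma cycle_of_avoiding_walk {x y : V} (h : G.Adj x y) (W : G.Walk y x)
    (he : s(x, y) ∉ W.edges) :
    ∃ (w : V) (c : G.Walk w w), c.IsCycle ∧ c.length ≤ W.length + 1 := by
  refine ⟨x, Walk.cons h W.bypass, ?_, ?_⟩
  · rw [Walk.cons_isCycle_iff]
    exact ⟨W.bypass_isPath, fun hmem => he (W.edges_bypass_subset hmem)⟩
  · rw [Walk.length_cons]
    exact Nat.add_le_add_right W.length_bypass_le 1

-- two distinct paths between the same endpoints give a short cycle
lemma cycle_of_two_paths {a b : V} {p q : G.Walk a b} (hp : p.IsPath) (hq : q.IsPath)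
    (hne : p ≠ q) :
    ∃ (w : V) (c : G.Walk w w), c.IsCycle ∧ c.length ≤ p.length + q.length := by
  have hns : ¬ (∀ e ∈ p.edges, e ∈ q.edges) := by
    intro hsub; exact hne (path_eq_of_edges_subset hp hq hsub)
  push_neg at hns
  obtain ⟨e, hep, heq⟩ := hns
  obtain ⟨x, y, h, p1, p2, rfl, rfl⟩ := walk_edge_decomp hep
  have hnd := hp.isTrail.edges_nodup
  rw [Walk.edges_append, Walk.edges_cons] at hnd
  have hnp1 : s(x, y) ∉ p1.edges := by
    intro hmem
    have := (List.nodup_append'.mp hnd).2.2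
    exact this hmem (by simp)
  have hnp2 : s(x, y) ∉ p2.edges := by
    have := (List.nodup_append'.mp hnd).2.1
    rw [List.nodup_cons] at this
    exact this.1
  set W : G.Walk y x := p2.append (q.reverse.append p1) with hW
  have heW : s(x, y) ∉ W.edges := by
    rw [hW, Walk.edges_append, Walk.edges_append, Walk.edges_reverse]
    simp only [List.mem_append, List.mem_reverse]
    push_neg
    exact ⟨hnp2, heq, hnp1⟩
  obtain ⟨w, c, hc, hcl⟩ := cycle_of_avoiding_walk h W heW
  refine ⟨w, c, hc, ?_⟩
  have : W.length = p2.length + (q.length + p1.length) := by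
    rw [hW, Walk.length_append, Walk.length_append, Walk.length_reverse]
  have hplen : (p1.append (Walk.cons h p2)).length = p1.length + (p2.length + 1) := by
    rw [Walk.length_append, Walk.length_cons]
  omega

-- removing an edge incident to the base of a cycle leaves a path
lemma cycle_minus_edge {a x : V} (c : G.Walk a a) (hc : c.IsCycle)
    (he : s(a, x) ∈ c.edges) :
    ∃ t : G.Walk x a, t.IsPath ∧ t.length + 1 = c.length ∧
      c.edges.Perm (s(a, x) :: t.edges) := by
  cases c with
  | nil => simp at he
  | @cons _ v _ h0 t0 =>
    have hct := (Walk.cons_isCycle_iff t0 h0).1 hc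
    rw [Walk.edges_cons, List.mem_cons] at he
    rcases he with he | he
    · have hxv : x = v := by rw [Sym2.congr_right] at he; exact he
      subst hxv
      exact ⟨t0, hct.1, by simp, by rw [Walk.edges_cons]⟩
    · -- s(a,x) is in t0; since t0 is a path ending at a, it is the last edge
      have he' : s(a, x) ∈ t0.reverse.edges := by
        rw [Walk.edges_reverse, List.mem_reverse]; exact he
      obtain ⟨hax, t3, ht3⟩ := path_first_edge hct.1.reverse he'
      have ht3p : t3.IsPath := by
        have := hct.1.reverse
        rw [ht3, Walk.cons_isPath_iff] at this
        exact this.1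
      have hanotin : a ∉ t3.support := by
        have := hct.1.reverse
        rw [ht3, Walk.cons_isPath_iff] at this
        exact this.2
      refine ⟨t3.append (Walk.cons h0.symm Walk.nil), ?_, ?_, ?_⟩
      · rw [Walk.isPath_def, Walk.support_append]
        simp only [Walk.support_cons, Walk.support_nil, List.tail_cons]
        rw [List.nodup_append']
        refine ⟨ht3p.support_nodup, List.nodup_singleton a, ?_⟩
        intro z hz hz'
        rw [List.mem_singleton] at hz'
        subst hz'
        exact hanotin hz
      · have h1 : t0.length = t3.length + 1 := by
          have := congrArg Walk.length ht3
          rw [Walk.length_reverse, Walk.length_cons] at this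
          omega
        rw [Walk.length_append, Walk.length_cons, Walk.length_nil, Walk.length_cons]
        omega
      · have hedges : t0.edges.Perm (s(a, x) :: t3.edges) := by
          have := congrArg Walk.edges ht3
          rw [Walk.edges_reverse, Walk.edges_cons] at this
          exact this ▸ (List.reverse_perm _).symm
        rw [Walk.edges_cons, Walk.edges_append, Walk.edges_cons, Walk.edges_nil]
        refine List.Perm.trans (hedges.cons _) ?_
        refine List.Perm.trans (List.Perm.swap _ _ _) ?_
        refine List.Perm.cons _ ?_
        have hsw : s(a, v) = s(v, a) := Sym2.eq_swap
        rw [hsw]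
        exact (List.perm_append_singleton _ _).symm

-- the length of a rotated walk
lemma length_rotate' {u v : V} (c : G.Walk v v) (h : u ∈ c.support) :
    (c.rotate u h).length = c.length := by
  have := (c.rotate_edges u h).perm.length_eq
  rwa [Walk.length_edges, Walk.length_edges] at this

-- arc extraction: a nontrivial path inside a cycle has a complementary arc
lemma arc_extraction {w a b : V} (c : G.Walk w w) (hc : c.IsCycle)
    (p : G.Walk a b) (hp : p.IsPath) (hplen : 1 ≤ p.length)
    (hsub : ∀ e ∈ p.edges, e ∈ c.edges) :
    ∃ r : G.Walk b a, r.IsPath ∧ r.length + p.length = c.length ∧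
      c.edges.Perm (p.edges ++ r.edges) := by
  cases p with
  | nil => simp at hplen
  | @cons _ x _ h0 p' =>
    have he : s(a, x) ∈ c.edges := hsub _ (by simp)
    have ha : a ∈ c.support := c.fst_mem_support_of_mem_edges he
    set c' := c.rotate a ha with hc'def
    have hc' : c'.IsCycle := hc.rotate ha
    have hcedges : c'.edges.Perm c.edges := (c.rotate_edges a ha).perm
    have he' : s(a, x) ∈ c'.edges := hcedges.mem_iff.2 he
    obtain ⟨t, htp, htl, hte⟩ := cycle_minus_edge c' hc' he'
    have hp' : p'.IsPath := (Walk.cons_isPath_iff _ _).1 hp |>.1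
    have hnd : s(a, x) ∉ p'.edges := by
      have := hp.isTrail.edges_nodup
      rw [Walk.edges_cons, List.nodup_cons] at this
      exact this.1
    have hsub' : ∀ e ∈ p'.edges, e ∈ t.edges := by
      intro e hep
      have h1 : e ∈ c.edges := hsub _ (by simp [hep])
      have h2 : e ∈ c'.edges := hcedges.mem_iff.2 h1
      have h3 := hte.mem_iff.1 h2
      rw [List.mem_cons] at h3
      rcases h3 with rfl | h3
      · exact absurd hep hnd
      · exact h3
    obtain ⟨r, rfl⟩ := path_prefix p' t hp' htp hsub'
    refine ⟨r, htp.of_append_right, ?_, ?_⟩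
    · have hcl : c'.length = c.length := length_rotate' c ha
      have : (p'.append r).length = p'.length + r.length := Walk.length_append _ _
      rw [Walk.length_cons]
      omega
    · have : c.edges.Perm c'.edges := hcedges.symm
      refine this.trans (hte.trans ?_)
      rw [Walk.edges_cons, Walk.edges_append]
      simp only [List.cons_append]
      exact List.Perm.refl _

end Aux

universe u

/-- In a bipartite graph of diameter 8 and girth 16, every path on 10 vertices
(a path of length 9) is a subgraph of exactly one 16-cycle, where cycles are
identified with their edge sets (rotations and reflections count once). -/
theorem path_length_nine_in_unique_sixteen_cycle {V : Type u} [DecidableEq V]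
    (G : SimpleGraph V) (hbip : G.Colorable 2)
    (hdiam : G.diam = 8) (hgirth : G.girth = 16)
    {a b : V} (p : G.Walk a b) (hp : p.IsPath) (hlen : p.length = 9) :
    ∃! s : Finset (Sym2 V),
      (∃ (w : V) (c : G.Walk w w), c.IsCycle ∧ c.length = 16 ∧ c.edges.toFinset = s) ∧
      p.edges.toFinset ⊆ s := by
  classical
  obtain ⟨C⟩ := hbip
  -- every cycle has length at least 16
  have hEtop : G.egirth ≠ ⊤ := by
    intro h
    rw [SimpleGraph.girth, h] at hgirth
    simp at hgirth
  have hcyc : ∀ (w : V) (c : G.Walk w w), c.IsCycle → 16 ≤ c.length := by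
    intro w c hc
    have h1 : G.egirth ≤ (c.length : ℕ∞) := SimpleGraph.le_egirth.1 le_rfl w c hc
    rw [← ENat.coe_toNat hEtop] at h1
    rw [SimpleGraph.girth] at hgirth
    rw [hgirth] at h1
    exact_mod_cast h1
  -- color endpoints differ
  have hCab : C a ≠ C b := by
    intro h
    have := (walk_parity C p).1 h
    rw [hlen] at this
    exact (by decide : ¬ Even 9) this
  -- shortest path from b to a
  have hreach : G.Reachable b a := p.reverse.reachable
  obtain ⟨w0, hw0⟩ := hreach.exists_walk_length_eq_dist
  set q : G.Walk b a := w0.bypass with hqdef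
  have hqpath : q.IsPath := w0.bypass_isPath
  have hqlen : q.length = G.dist b a := by
    have h1 : G.dist b a ≤ q.length := SimpleGraph.dist_le q
    have h2 : q.length ≤ w0.length := w0.length_bypass_le
    omega
  have hqodd : ¬ Even q.length := by
    intro h
    exact hCab ((walk_parity C q).2 h).symm
  have hqle : q.length ≤ 7 := by
    have hET : G.ediam ≠ ⊤ := by
      intro h
      have := G.diam_eq_zero_of_ediam_eq_top h
      omega
    have h8 : G.dist b a ≤ 8 := hdiam ▸ SimpleGraph.dist_le_diam hET
    rw [Nat.not_even_iff] at hqodd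
    omega
  -- p and q meet only at a and b
  have hdisj : ∀ v, v ∈ p.support → v ∈ q.support → v = a ∨ v = b := by
    intro v hvp hvq
    by_contra hcon
    push_neg at hcon
    set p1 := p.takeUntil v hvp with hp1
    set p2 := p.dropUntil v hvp with hp2
    set q1 := q.takeUntil v hvq with hq1
    set q2 := q.dropUntil v hvq with hq2
    have hpspec : p1.append p2 = p := p.take_spec hvp
    have hqspec : q1.append q2 = q := q.take_spec hvq
    have hplens : p1.length + p2.length = 9 := by
      have := congrArg SimpleGraph.Walk.length hpspec
      rw [SimpleGraph.Walk.length_append] at this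
      omega
    have hqlens : q1.length + q2.length = q.length := by
      have := congrArg SimpleGraph.Walk.length hqspec
      rw [SimpleGraph.Walk.length_append] at this
      omega
    have hp1pos : p1.length ≠ 0 := by
      intro h
      exact hcon.1 (SimpleGraph.Walk.eq_of_length_eq_zero h).symm
    have hp2pos : p2.length ≠ 0 := by
      intro h
      exact hcon.2 (SimpleGraph.Walk.eq_of_length_eq_zero h)
    have hp1path : p1.IsPath := hp.takeUntil hvp
    have hp2path : p2.IsPath := hp.dropUntil hvp
    have hq1path : q1.IsPath := hqpath.takeUntil hvq
    have hq2path : q2.IsPath := hqpath.dropUntil hvq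
    by_cases h1 : p1 = q2.reverse
    · by_cases h2 : p2 = q1.reverse
      · have hl1 : p1.length = q2.length := by
          rw [h1, SimpleGraph.Walk.length_reverse]
        have hl2 : p2.length = q1.length := by
          rw [h2, SimpleGraph.Walk.length_reverse]
        omega
      · obtain ⟨w', c', hc', hcl⟩ := cycle_of_two_paths hp2path hq1path.reverse h2
        have h16 := hcyc w' c' hc'
        rw [SimpleGraph.Walk.length_reverse] at hcl
        omega
    · obtain ⟨w', c', hc', hcl⟩ := cycle_of_two_paths hp1path hq2path.reverse h1
      have h16 := hcyc w' c' hc'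
      rw [SimpleGraph.Walk.length_reverse] at hcl
      omega
  -- p and q share no edge
  have hedisj : ∀ e ∈ p.edges, e ∉ q.edges := by
    intro e hep heq
    obtain ⟨x, y, hxy, p1, p2, hdec, rfl⟩ := walk_edge_decomp hep
    have hxp : x ∈ p.support := p.fst_mem_support_of_mem_edges hep
    have hyp : y ∈ p.support := p.snd_mem_support_of_mem_edges hep
    have hxq : x ∈ q.support := q.fst_mem_support_of_mem_edges heq
    have hyq : y ∈ q.support := q.snd_mem_support_of_mem_edges heq
    have hxab := hdisj x hxp hxq
    have hyab := hdisj y hyp hyq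
    have hne : x ≠ y := hxy.ne
    have heab : s(x, y) = s(a, b) := by
      rcases hxab with rfl | rfl <;> rcases hyab with rfl | rfl
      · exact absurd rfl hne
      · rfl
      · exact Sym2.eq_swap
      · exact absurd rfl hne
    rw [heab] at hep
    obtain ⟨h', p'', hp''⟩ := path_first_edge hp hep
    have : p''.IsPath := by
      rw [hp'', SimpleGraph.Walk.cons_isPath_iff] at hp
      exact hp.1
    have hnil : p'' = SimpleGraph.Walk.nil := path_loop_nil this
    have : p.length = 1 := by
      rw [hp'', hnil]
      simp
    omega
  -- the cycle p ++ q
  set c1 : G.Walk a a := p.append q with hc1def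
  have hc1len : c1.length = 9 + q.length := by
    rw [hc1def, SimpleGraph.Walk.length_append, hlen]
  have hc1 : c1.IsCycle := by
    rw [SimpleGraph.Walk.isCycle_def]
    refine ⟨?_, ?_, ?_⟩
    · rw [SimpleGraph.Walk.isTrail_def, hc1def, SimpleGraph.Walk.edges_append]
      exact List.Nodup.append hp.isTrail.edges_nodup hqpath.isTrail.edges_nodup hedisj
    · intro h
      have := congrArg SimpleGraph.Walk.length h
      rw [hc1len] at this
      simp at this
    · rw [hc1def, SimpleGraph.Walk.tail_support_append]
      refine List.Nodup.append ?_ ?_ ?_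
      · exact hp.support_nodup.tail
      · exact hqpath.support_nodup.tail
      · intro v hv1 hv2
        have hvp : v ∈ p.support := List.mem_of_mem_tail hv1
        have hvq : v ∈ q.support := List.mem_of_mem_tail hv2
        rcases hdisj v hvp hvq with rfl | rfl
        · have := hp.support_nodup
          rw [p.support_eq_cons, List.nodup_cons] at this
          exact this.1 hv1
        · have := hqpath.support_nodup
          rw [q.support_eq_cons, List.nodup_cons] at this
          exact this.1 hv2
  have hq7 : q.length = 7 := by
    have := hcyc a c1 hc1
    omega
  have hc116 : c1.length = 16 := by omega
  -- conclusion
  refine ⟨c1.edges.toFinset, ⟨⟨a, c1, hc1, hc116, rfl⟩, ?_⟩, ?_⟩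
  · intro e he
    rw [List.mem_toFinset] at he ⊢
    rw [hc1def, SimpleGraph.Walk.edges_append]
    exact List.mem_append_left _ he
  · rintro s ⟨⟨w, c2, hc2, hc2len, rfl⟩, hsub⟩
    have hsub' : ∀ e ∈ p.edges, e ∈ c2.edges := by
      intro e he
      have := hsub (List.mem_toFinset.2 he)
      exact List.mem_toFinset.1 this
    obtain ⟨r, hrp, hrlen, hperm⟩ := arc_extraction c2 hc2 p hp (by omega) hsub'
    have hrq : r = q := by
      by_contra hne
      obtain ⟨w', c', hc', hcl⟩ := cycle_of_two_paths hrp hqpath hne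
      have := hcyc w' c' hc'
      omega
    subst hrq
    have h1 : c2.edges.toFinset = (p.edges ++ q.edges).toFinset :=
      List.toFinset_eq_of_perm _ _ hperm
    rw [h1, hc1def, SimpleGraph.Walk.edges_append]
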